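/- Let L : 𝒰 ⇄ 𝒱 : R be an adjunction between cartesian closed categories such that L preserves finite products. Then for every object U of 𝒰 and all objects X, Y of 𝒱 there is an isomorphism R(Y^{L U × X}) ≅ (R(Y^X))^U in 𝒰, natural in U, X and Y; in particular, taking X terminal, R(Y^{L U}) ≅ (R Y)^U naturally. -/

import Mathlib

open CategoryTheory MonoidalCategory

universe v₁ v₂ u₁ u₂

noncomputable section Aux

namespace Stmt13Aux

open CategoryTheory.MonoidalClosed CategoryTheory.CartesianMonoidalCategory

attribute [local instance] BraidedCategory.ofCartesianMonoidalCategory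

variable {C : Type*} [Category C] [CartesianMonoidalCategory C] [MonoidalClosed C]

theorem curry_comp_pre {B B' Z Y : C} (w : B ⟶ B') (p : B' ⊗ Z ⟶ Y) :
    MonoidalClosed.curry (w ▷ Z ≫ p) = MonoidalClosed.curry p ≫ (pre w).app Y := by
  apply uncurry_injective
  rw [uncurry_curry, uncurry_eq, MonoidalCategory.whiskerLeft_comp, Category.assoc,
    id_tensor_pre_app_comp_ev, whisker_exchange_assoc]
  rw [← uncurry_eq, uncurry_curry]

theorem uncurry_comp_pre {B B' Z Y : C} (w : B ⟶ B') (m : Z ⟶ (ihom B').obj Y) :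
    MonoidalClosed.uncurry (m ≫ (pre w).app Y) = w ▷ Z ≫ MonoidalClosed.uncurry m := by
  conv_lhs => rw [← curry_uncurry m]
  rw [← curry_comp_pre, uncurry_curry]

variable {𝒰 : Type u₁} {𝒱 : Type u₂} [Category.{v₁} 𝒰] [Category.{v₂} 𝒱]
    [CartesianMonoidalCategory 𝒰] [MonoidalClosed 𝒰]
    [CartesianMonoidalCategory 𝒱] [MonoidalClosed 𝒱]
    (L : 𝒰 ⥤ 𝒱) (R : 𝒱 ⥤ 𝒰) (adj : L ⊣ R) [Limits.PreservesFiniteProducts L]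

instance (U A : 𝒰) : IsIso (prodComparison L U A) :=
  isIso_prodComparison_of_preservesLimit_pair L U A

/-- The structural iso `X ⊗ L(U ⊗ A) ≅ (LU ⊗ X) ⊗ LA`. -/
def sIso (U A : 𝒰) (X : 𝒱) : X ⊗ L.obj (U ⊗ A) ≅ (L.obj U ⊗ X) ⊗ L.obj A :=
  whiskerLeftIso X (asIso (prodComparison L U A)) ≪≫
    (α_ X (L.obj U) (L.obj A)).symm ≪≫ whiskerRightIso (β_ X (L.obj U)) (L.obj A)

theorem sIso_natural_A (U : 𝒰) {A A' : 𝒰} (f : A' ⟶ A) (X : 𝒱) :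
    (sIso L U A' X).hom ≫ ((L.obj U ⊗ X) ◁ L.map f) =
      (X ◁ L.map (U ◁ f)) ≫ (sIso L U A X).hom := by
  simp only [sIso, Iso.trans_hom, whiskerLeftIso_hom, Iso.symm_hom, whiskerRightIso_hom,
    asIso_hom, Category.assoc]
  rw [← whisker_exchange]
  rw [← associator_inv_naturality_right_assoc, ← MonoidalCategory.whiskerLeft_comp_assoc,
    ← prodComparison_natural_whiskerLeft, MonoidalCategory.whiskerLeft_comp_assoc]

theorem sIso_natural_X (U A : 𝒰) {X X' : 𝒱} (g : X ⟶ X') :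
    (sIso L U A X).hom ≫ ((L.obj U ◁ g) ▷ L.obj A) =
      (g ▷ L.obj (U ⊗ A)) ≫ (sIso L U A X').hom := by
  simp only [sIso, Iso.trans_hom, whiskerLeftIso_hom, Iso.symm_hom, whiskerRightIso_hom,
    asIso_hom, Category.assoc]
  rw [← comp_whiskerRight, ← BraidedCategory.braiding_naturality_left, comp_whiskerRight,
    ← associator_inv_naturality_left_assoc, whisker_exchange_assoc]

theorem sIso_natural_U {U U' : 𝒰} (f : U ⟶ U') (A : 𝒰) (X : 𝒱) :
    (sIso L U A X).hom ≫ ((L.map f ▷ X) ▷ L.obj A) =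
      (X ◁ L.map (f ▷ A)) ≫ (sIso L U' A X).hom := by
  simp only [sIso, Iso.trans_hom, whiskerLeftIso_hom, Iso.symm_hom, whiskerRightIso_hom,
    asIso_hom, Category.assoc]
  rw [← comp_whiskerRight, ← BraidedCategory.braiding_naturality_right, comp_whiskerRight,
    ← associator_inv_naturality_middle_assoc, ← MonoidalCategory.whiskerLeft_comp_assoc,
    ← prodComparison_natural_whiskerRight, MonoidalCategory.whiskerLeft_comp_assoc]

/-- The master hom-set equivalence. -/
def Φ (U : 𝒰) (X Y : 𝒱) (A : 𝒰) :
    (A ⟶ R.obj ((ihom (L.obj U ⊗ X)).obj Y)) ≃ (A ⟶ (ihom U).obj (R.obj ((ihom X).obj Y))) :=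
  ((adj.homEquiv A _).symm.trans
    (((ihom.adjunction (L.obj U ⊗ X)).homEquiv _ _).symm.trans
      (((Equiv.refl _).trans
        { toFun := fun g => (sIso L U A X).hom ≫ g
          invFun := fun g => (sIso L U A X).inv ≫ g
          left_inv := fun g => by simp
          right_inv := fun g => by simp }).trans
        (((ihom.adjunction X).homEquiv _ _).trans
          ((adj.homEquiv (U ⊗ A) _).trans
            ((ihom.adjunction U).homEquiv _ _))))))

theorem Φ_apply (U : 𝒰) (X Y : 𝒱) (A : 𝒰) (g : A ⟶ R.obj ((ihom (L.obj U ⊗ X)).obj Y)) :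
    Φ L R adj U X Y A g =
      MonoidalClosed.curry (adj.homEquiv (U ⊗ A) _
        (MonoidalClosed.curry ((sIso L U A X).hom ≫
          MonoidalClosed.uncurry ((adj.homEquiv A _).symm g)))) := rfl

theorem Φ_natural_left (U : 𝒰) (X Y : 𝒱) {A A' : 𝒰} (f : A' ⟶ A)
    (g : A ⟶ R.obj ((ihom (L.obj U ⊗ X)).obj Y)) :
    Φ L R adj U X Y A' (f ≫ g) = f ≫ Φ L R adj U X Y A g := by
  rw [Φ_apply, Φ_apply, Adjunction.homEquiv_naturality_left_symm, uncurry_natural_left,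
    ← Category.assoc, sIso_natural_A, Category.assoc, curry_natural_left,
    Adjunction.homEquiv_naturality_left, curry_natural_left]

theorem Φ_natural_Y (U : 𝒰) (X : 𝒱) {Y Y' : 𝒱} (h : Y ⟶ Y') (A : 𝒰)
    (g : A ⟶ R.obj ((ihom (L.obj U ⊗ X)).obj Y)) :
    Φ L R adj U X Y' A (g ≫ R.map ((ihom (L.obj U ⊗ X)).map h)) =
      Φ L R adj U X Y A g ≫ (ihom U).map (R.map ((ihom X).map h)) := by
  rw [Φ_apply, Φ_apply, Adjunction.homEquiv_naturality_right_symm, uncurry_natural_right,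
    ← Category.assoc, curry_natural_right, Adjunction.homEquiv_naturality_right,
    curry_natural_right]

theorem Φ_natural_X (U : 𝒰) {X X' : 𝒱} (g : X ⟶ X') (Y : 𝒱) (A : 𝒰)
    (f : A ⟶ R.obj ((ihom (L.obj U ⊗ X')).obj Y)) :
    Φ L R adj U X Y A (f ≫ R.map ((pre (L.obj U ◁ g)).app Y)) =
      Φ L R adj U X' Y A f ≫ (ihom U).map (R.map ((pre g).app Y)) := by
  rw [Φ_apply, Φ_apply, Adjunction.homEquiv_naturality_right_symm, uncurry_comp_pre,
    ← Category.assoc, sIso_natural_X, Category.assoc, curry_comp_pre,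
    Adjunction.homEquiv_naturality_right, curry_natural_right]

theorem Φ_natural_U {U U' : 𝒰} (f : U ⟶ U') (X Y : 𝒱) (A : 𝒰)
    (a : A ⟶ R.obj ((ihom (L.obj U' ⊗ X)).obj Y)) :
    Φ L R adj U X Y A (a ≫ R.map ((pre (L.map f ▷ X)).app Y)) =
      Φ L R adj U' X Y A a ≫ (pre f).app (R.obj ((ihom X).obj Y)) := by
  rw [Φ_apply, Φ_apply, Adjunction.homEquiv_naturality_right_symm, uncurry_comp_pre,
    ← Category.assoc, sIso_natural_U, Category.assoc, curry_natural_left,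
    Adjunction.homEquiv_naturality_left, curry_comp_pre]

/-- The natural isomorphism. -/
def eIso (U : 𝒰) (X Y : 𝒱) :
    R.obj ((ihom (L.obj U ⊗ X)).obj Y) ≅ (ihom U).obj (R.obj ((ihom X).obj Y)) where
  hom := Φ L R adj U X Y _ (𝟙 _)
  inv := (Φ L R adj U X Y _).symm (𝟙 _)
  hom_inv_id := by
    apply (Φ L R adj U X Y _).injective
    rw [Φ_natural_left]
    simp
  inv_hom_id := by
    rw [← Φ_natural_left]
    simp

/-- `Y^{LU} ≅ Y^{LU ⊗ 1}`. -/
def expUnitProdIso (Z Y : 𝒱) : (ihom Z).obj Y ≅ (ihom (Z ⊗ 𝟙_ 𝒱)).obj Y where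
  hom := (pre (ρ_ Z).hom).app Y
  inv := (pre (ρ_ Z).inv).app Y
  hom_inv_id := by
    rw [← NatTrans.comp_app, ← pre_map, Iso.inv_hom_id, pre_id, NatTrans.id_app]
  inv_hom_id := by
    rw [← NatTrans.comp_app, ← pre_map, Iso.hom_inv_id, pre_id, NatTrans.id_app]

end Stmt13Aux

end Aux

/-- For an adjunction `L ⊣ R` between cartesian closed categories with `L` preserving
finite products, there are isomorphisms `R(Y^{LU × X}) ≅ (R(Y^X))^U`, natural in `U`, `X`
and `Y`; in particular `R(Y^{LU}) ≅ (R Y)^U`. -/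
theorem stmt13 {𝒰 : Type u₁} {𝒱 : Type u₂} [Category.{v₁} 𝒰] [Category.{v₂} 𝒱]
    [CartesianMonoidalCategory 𝒰] [MonoidalClosed 𝒰]
    [CartesianMonoidalCategory 𝒱] [MonoidalClosed 𝒱]
    (L : 𝒰 ⥤ 𝒱) (R : 𝒱 ⥤ 𝒰) (adj : L ⊣ R) [Limits.PreservesFiniteProducts L] :
    ∃ e : ∀ (U : 𝒰) (X Y : 𝒱),
        R.obj ((ihom (L.obj U ⊗ X)).obj Y) ≅ (ihom U).obj (R.obj ((ihom X).obj Y)),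
      (∀ (U : 𝒰) (X Y Y' : 𝒱) (h : Y ⟶ Y'),
          R.map ((ihom (L.obj U ⊗ X)).map h) ≫ (e U X Y').hom =
            (e U X Y).hom ≫ (ihom U).map (R.map ((ihom X).map h))) ∧
      (∀ (U : 𝒰) (X X' : 𝒱) (g : X ⟶ X') (Y : 𝒱),
          R.map ((MonoidalClosed.pre (L.obj U ◁ g)).app Y) ≫ (e U X Y).hom =
            (e U X' Y).hom ≫ (ihom U).map (R.map ((MonoidalClosed.pre g).app Y))) ∧
      (∀ (U U' : 𝒰) (f : U ⟶ U') (X Y : 𝒱),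
          R.map ((MonoidalClosed.pre (L.map f ▷ X)).app Y) ≫ (e U X Y).hom =
            (e U' X Y).hom ≫ (MonoidalClosed.pre f).app (R.obj ((ihom X).obj Y))) ∧
      (∀ (U : 𝒰) (Y : 𝒱),
          Nonempty (R.obj ((ihom (L.obj U)).obj Y) ≅ (ihom U).obj (R.obj Y))) := by
  open Stmt13Aux in
  refine ⟨eIso L R adj, ?_, ?_, ?_, ?_⟩
  · intro U X Y Y' h
    show R.map _ ≫ Φ L R adj U X Y' _ (𝟙 _) = Φ L R adj U X Y _ (𝟙 _) ≫ _
    rw [← Φ_natural_left, Category.comp_id, ← Category.id_comp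
      (R.map ((ihom (L.obj U ⊗ X)).map h)), Φ_natural_Y]
  · intro U X X' g Y
    show R.map _ ≫ Φ L R adj U X Y _ (𝟙 _) = Φ L R adj U X' Y _ (𝟙 _) ≫ _
    rw [← Φ_natural_left, Category.comp_id, ← Category.id_comp
      (R.map ((MonoidalClosed.pre (L.obj U ◁ g)).app Y)), Φ_natural_X]
  · intro U U' f X Y
    show R.map _ ≫ Φ L R adj U X Y _ (𝟙 _) = Φ L R adj U' X Y _ (𝟙 _) ≫ _
    rw [← Φ_natural_left, Category.comp_id, ← Category.id_comp
      (R.map ((MonoidalClosed.pre (L.map f ▷ X)).app Y)), Φ_natural_U]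
  · intro U Y
    exact ⟨R.mapIso (expUnitProdIso (L.obj U) Y) ≪≫ eIso L R adj U (𝟙_ 𝒱) Y ≪≫
      (ihom U).mapIso (R.mapIso (MonoidalClosed.unitIsoSelf (C := 𝒱) Y))⟩
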